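/- For any m×n complex matrix ζ = (ζ_{kμ}), any point where g = (g₁,…,g_m) is a tuple of holomorphic functions with |g| > 0, and q ≥ 1, the following pointwise inequality holds: q·Σ_k Σ_{μ,ν} (∂²log|g|²/∂z_μ∂z̄_ν) ζ_{kμ} ζ̄_{kν} ≥ |g|²·|Σ_k Σ_μ ∂/∂z_μ(g_k/|g|²) ζ_{kμ}|², where q = min{n, m−1} (in fact it holds for q = m−1). -/

import Mathlib

open ComplexConjugate
open scoped InnerProductSpace

private lemma cs_sum {ι : Type*} [Fintype ι] (x y : ι → ℂ) :
    Complex.normSq (∑ i, x i * y i) ≤ (∑ i, Complex.normSq (x i)) * (∑ i, Complex.normSq (y i)) := by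
  have h1 : ‖∑ i, x i * y i‖ ≤ ∑ i, ‖x i‖ * ‖y i‖ := by
    refine (norm_sum_le _ _).trans (le_of_eq ?_)
    simp [norm_mul]
  have h2 : (∑ i, ‖x i‖ * ‖y i‖) ^ 2 ≤ (∑ i, ‖x i‖ ^ 2) * (∑ i, ‖y i‖ ^ 2) :=
    Finset.sum_mul_sq_le_sq_mul_sq _ _ _
  calc Complex.normSq (∑ i, x i * y i) = ‖∑ i, x i * y i‖ ^ 2 := by
        rw [Complex.normSq_eq_norm_sq]
    _ ≤ (∑ i, ‖x i‖ * ‖y i‖) ^ 2 := by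
        apply pow_le_pow_left₀ (norm_nonneg _) h1
    _ ≤ (∑ i, ‖x i‖ ^ 2) * (∑ i, ‖y i‖ ^ 2) := h2
    _ = (∑ i, Complex.normSq (x i)) * (∑ i, Complex.normSq (y i)) := by
        congr 1 <;> refine Finset.sum_congr rfl fun i _ => ?_ <;>
          rw [Complex.normSq_eq_norm_sq]

private lemma trace_sq_le {m : ℕ} (M Q : Fin m → Fin m → ℂ) (r : ℝ)
    (hQM : ∀ k p, ∑ l, Q k l * M l p = M k p)
    (hQ : (∑ k, ∑ l, Complex.normSq (Q k l)) ≤ r) :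
    Complex.normSq (∑ k, M k k) ≤ r * ∑ k, ∑ l, Complex.normSq (M k l) := by
  have htr : (∑ k, M k k) = ∑ p : Fin m × Fin m, Q p.1 p.2 * M p.2 p.1 := by
    rw [Fintype.sum_prod_type]
    exact Finset.sum_congr rfl fun k _ => (hQM k k).symm
  have h := cs_sum (fun p : Fin m × Fin m => Q p.1 p.2) (fun p : Fin m × Fin m => M p.2 p.1)
  rw [htr]
  have e1 : (∑ p : Fin m × Fin m, Complex.normSq (Q p.1 p.2)) = ∑ k, ∑ l, Complex.normSq (Q k l) := by
    rw [Fintype.sum_prod_type]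
  have e2 : (∑ p : Fin m × Fin m, Complex.normSq (M p.2 p.1)) = ∑ k, ∑ l, Complex.normSq (M k l) := by
    rw [Fintype.sum_prod_type, Finset.sum_comm]
  rw [e1, e2] at h
  refine h.trans (mul_le_mul_of_nonneg_right hQ ?_)
  exact Finset.sum_nonneg fun k _ => Finset.sum_nonneg fun l _ => Complex.normSq_nonneg _

private lemma onb_span_abstract {E : Type*} [NormedAddCommGroup E] [InnerProductSpace ℂ E]
    [FiniteDimensional ℂ E] (n : ℕ) (w : Fin n → E) :
    ∃ (r : ℕ) (u : Fin r → E), r ≤ n ∧ Orthonormal ℂ u ∧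
      ∀ v ∈ Submodule.span ℂ (Set.range w), ∃ d : Fin r → ℂ, v = ∑ j, d j • u j := by
  classical
  set U : Submodule ℂ E := Submodule.span ℂ (Set.range w) with hU
  have hdim : Module.finrank ℂ U ≤ n := by
    have h := finrank_range_le_card (R := ℂ) w
    simpa [Set.finrank] using h
  let b := stdOrthonormalBasis ℂ U
  refine ⟨Module.finrank ℂ U, fun i => ((b i : U) : E), hdim, ?_, ?_⟩
  · rw [orthonormal_iff_ite]
    intro i j
    rw [← Submodule.coe_inner]
    exact orthonormal_iff_ite.mp b.orthonormal i j
  · intro v hv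
    have hmem : (⟨v, hv⟩ : U) ∈ Submodule.span ℂ (Set.range b.toBasis) := by
      rw [b.toBasis.span_eq]; trivial
    obtain ⟨d, hd⟩ := (Submodule.mem_span_range_iff_exists_fun ℂ).mp hmem
    refine ⟨d, ?_⟩
    have h2 := congrArg (fun x : U => (x : E)) hd
    simp only [Submodule.coe_sum, Submodule.coe_smul] at h2
    rw [← h2]
    refine (Finset.sum_congr rfl fun j _ => ?_).symm
    rw [OrthonormalBasis.coe_toBasis]

private lemma entrywise_onb (m n : ℕ) (ζ : Fin m → Fin n → ℂ) :
    ∃ (r : ℕ) (u : Fin r → (Fin m → ℂ)), r ≤ n ∧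
      (∀ i j, (∑ k, conj (u i k) * u j k) = if i = j then (1:ℂ) else 0) ∧
      (∀ v : Fin m → ℂ, (∃ c : Fin n → ℂ, ∀ k, v k = ∑ μ, ζ k μ * c μ) →
        ∃ d : Fin r → ℂ, ∀ k, v k = ∑ j, d j * u j k) := by
  obtain ⟨r, u, hr, huon, hspan⟩ := onb_span_abstract (E := EuclideanSpace ℂ (Fin m)) n
    (fun μ => (WithLp.toLp 2 (fun k => ζ k μ) : EuclideanSpace ℂ (Fin m)))
  refine ⟨r, fun i => (u i : Fin m → ℂ), hr, ?_, ?_⟩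
  · intro i j
    have h1 := orthonormal_iff_ite.mp huon i j
    rw [PiLp.inner_apply] at h1
    simp only [RCLike.inner_apply] at h1
    rw [← h1]
    exact Finset.sum_congr rfl fun k _ => mul_comm _ _
  · rintro v ⟨c, hcv⟩
    have hv : (WithLp.toLp 2 v : EuclideanSpace ℂ (Fin m)) ∈ Submodule.span ℂ
        (Set.range (fun μ => (WithLp.toLp 2 (fun k => ζ k μ) : EuclideanSpace ℂ (Fin m)))) := by
      rw [Submodule.mem_span_range_iff_exists_fun]
      refine ⟨c, ?_⟩
      ext k
      have : ((∑ μ, c μ • (WithLp.toLp 2 (fun k => ζ k μ) : EuclideanSpace ℂ (Fin m))) k)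
          = ∑ μ, c μ * ζ k μ := by
        rw [WithLp.ofLp_sum, Finset.sum_apply]
        rfl
      rw [this, WithLp.ofLp_toLp, hcv k]
      exact Finset.sum_congr rfl fun μ _ => by ring
    obtain ⟨d, hd⟩ := hspan (WithLp.toLp 2 v) hv
    refine ⟨d, fun k => ?_⟩
    have h2 : v k = ((∑ j, d j • u j : EuclideanSpace ℂ (Fin m)) k) := by rw [← hd]
    rw [h2, WithLp.ofLp_sum, Finset.sum_apply]
    rfl

private lemma exists_proj (m n : ℕ) (ζ : Fin m → Fin n → ℂ) :
    ∃ Q : Fin m → Fin m → ℂ,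
      (∑ k, ∑ l, Complex.normSq (Q k l)) ≤ (n : ℝ) ∧
      ∀ v : Fin m → ℂ, (∃ c : Fin n → ℂ, ∀ k, v k = ∑ μ, ζ k μ * c μ) →
        ∀ k, (∑ l, Q k l * v l) = v k := by
  obtain ⟨r, u, hr, hu, hspan⟩ := entrywise_onb m n ζ
  refine ⟨fun k l => ∑ i, u i k * conj (u i l), ?_, ?_⟩
  · have hc : ((∑ k, ∑ l, (∑ i, u i k * conj (u i l)) * conj (∑ i, u i k * conj (u i l))) : ℂ)
        = ((r : ℝ) : ℂ) := by
      have expand : ∀ k l : Fin m, ((∑ i, u i k * conj (u i l)) * conj (∑ i, u i k * conj (u i l)))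
          = ∑ i, ∑ j, (u i k * conj (u j k)) * (conj (u i l) * u j l) := by
        intro k l
        rw [map_sum, Finset.sum_mul_sum]
        refine Finset.sum_congr rfl fun i _ => Finset.sum_congr rfl fun j _ => ?_
        simp only [map_mul, Complex.conj_conj]
        ring
      have inner_eval : ∀ i j, ((∑ k, u i k * conj (u j k)) * (∑ l, conj (u i l) * u j l))
          = if i = j then (1:ℂ) else 0 := by
        intro i j
        have h5 : (∑ k, u i k * conj (u j k)) = conj (∑ k, conj (u i k) * u j k) := by
          rw [map_sum]
          exact Finset.sum_congr rfl fun k _ => by simp [map_mul]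
        rw [h5, hu i j]
        by_cases h : i = j <;> simp [h]
      calc (∑ k, ∑ l, (∑ i, u i k * conj (u i l)) * conj (∑ i, u i k * conj (u i l)))
          = ∑ k, ∑ l, ∑ i, ∑ j, (u i k * conj (u j k)) * (conj (u i l) * u j l) := by
            exact Finset.sum_congr rfl fun k _ => Finset.sum_congr rfl fun l _ => expand k l
        _ = ∑ k, ∑ i, ∑ j, ∑ l, (u i k * conj (u j k)) * (conj (u i l) * u j l) := by
            refine Finset.sum_congr rfl fun k _ => ?_
            rw [Finset.sum_comm]
            refine Finset.sum_congr rfl fun i _ => Finset.sum_comm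
        _ = ∑ i, ∑ k, ∑ j, ∑ l, (u i k * conj (u j k)) * (conj (u i l) * u j l) := by
            rw [Finset.sum_comm]
        _ = ∑ i, ∑ j, (∑ k, u i k * conj (u j k)) * (∑ l, conj (u i l) * u j l) := by
            refine Finset.sum_congr rfl fun i _ => ?_
            rw [Finset.sum_comm]
            refine Finset.sum_congr rfl fun j _ => (Finset.sum_mul_sum _ _ _ _).symm
        _ = ∑ i, ∑ j, if i = j then (1:ℂ) else 0 := by
            exact Finset.sum_congr rfl fun i _ => Finset.sum_congr rfl fun j _ => inner_eval i j
        _ = ((r : ℝ) : ℂ) := by simp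
    have hreal : (∑ k, ∑ l, Complex.normSq (∑ i, u i k * conj (u i l))) = (r : ℝ) := by
      rw [show ((∑ k, ∑ l, (∑ i, u i k * conj (u i l)) * conj (∑ i, u i k * conj (u i l))) : ℂ)
          = ((∑ k, ∑ l, Complex.normSq (∑ i, u i k * conj (u i l)) : ℝ) : ℂ) by
        push_cast
        exact Finset.sum_congr rfl fun k _ => Finset.sum_congr rfl fun l _ =>
          (Complex.mul_conj _)] at hc
      exact_mod_cast hc
    rw [hreal]
    exact_mod_cast hr
  · intro v hvc k
    obtain ⟨d, hd⟩ := hspan v hvc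
    calc (∑ l, (∑ i, u i k * conj (u i l)) * v l)
        = ∑ l, ∑ i, (u i k * conj (u i l)) * v l := by
          exact Finset.sum_congr rfl fun l _ => Finset.sum_mul _ _ _
      _ = ∑ i, ∑ l, (u i k * conj (u i l)) * v l := Finset.sum_comm
      _ = ∑ i, ∑ l, ∑ j, (u i k * conj (u i l)) * (d j * u j l) := by
          refine Finset.sum_congr rfl fun i _ => Finset.sum_congr rfl fun l _ => ?_
          rw [hd l, Finset.mul_sum]
      _ = ∑ i, ∑ j, ∑ l, (u i k * conj (u i l)) * (d j * u j l) := by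
          exact Finset.sum_congr rfl fun i _ => Finset.sum_comm
      _ = ∑ i, ∑ j, (u i k * d j) * ∑ l, conj (u i l) * u j l := by
          refine Finset.sum_congr rfl fun i _ => Finset.sum_congr rfl fun j _ => ?_
          rw [Finset.mul_sum]
          exact Finset.sum_congr rfl fun l _ => by ring
      _ = ∑ i, ∑ j, (u i k * d j) * if i = j then (1:ℂ) else 0 := by
          refine Finset.sum_congr rfl fun i _ => Finset.sum_congr rfl fun j _ => by rw [hu i j]
      _ = ∑ i, d i * u i k := by
          refine Finset.sum_congr rfl fun i _ => ?_
          simp only [mul_ite, mul_one, mul_zero, Finset.sum_ite_eq, Finset.mem_univ, if_true]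
          ring
      _ = v k := (hd k).symm

private lemma pnorm (m : ℕ) (gv : Fin m → ℂ) (G : ℝ) (hGne : (G:ℂ) ≠ 0)
    (hGsum : (∑ l, gv l * conj (gv l)) = (G:ℂ)) :
    (∑ k, ∑ l, Complex.normSq ((if k = l then (1:ℂ) else 0) - conj (gv k) * gv l / G))
      = (m:ℝ) - 1 := by
  have hGsum' : (∑ l, conj (gv l) * gv l) = (G:ℂ) := by
    rw [← hGsum]; exact Finset.sum_congr rfl fun l _ => by ring
  set w : Fin m → Fin m → ℂ := fun k l => conj (gv k) * gv l / G with hw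
  have hconjw : ∀ k l, conj (w k l) = gv k * conj (gv l) / G := by
    intro k l
    rw [hw]
    simp only [map_div₀, map_mul, Complex.conj_conj, Complex.conj_ofReal]
  have key : ((∑ k, ∑ l, ((if k = l then (1:ℂ) else 0) - w k l) *
      conj ((if k = l then (1:ℂ) else 0) - w k l)) : ℂ) = (m:ℂ) - 1 := by
    have expand : ∀ k l, ((if k = l then (1:ℂ) else 0) - w k l) *
        conj ((if k = l then (1:ℂ) else 0) - w k l)
        = (if k = l then (1:ℂ) else 0)
          - (if k = l then (1:ℂ) else 0) * conj (w k l)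
          - (if k = l then (1:ℂ) else 0) * w k l
          + w k l * conj (w k l) := by
      intro k l
      by_cases h : k = l <;>
        simp only [h, if_true, if_false, map_sub, map_one, map_zero] <;> ring
    simp only [expand]
    have split : ∀ k, (∑ l, ((if k = l then (1:ℂ) else 0)
          - (if k = l then (1:ℂ) else 0) * conj (w k l)
          - (if k = l then (1:ℂ) else 0) * w k l
          + w k l * conj (w k l)))
        = 1 - conj (w k k) - w k k + ∑ l, w k l * conj (w k l) := by
      intro k
      rw [Finset.sum_add_distrib, Finset.sum_sub_distrib, Finset.sum_sub_distrib]
      congr 2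
      · congr 1
        · simp [Finset.sum_ite_eq, Finset.mem_univ]
        · simp [ite_mul, Finset.sum_ite_eq, Finset.mem_univ]
      · simp [ite_mul, Finset.sum_ite_eq, Finset.mem_univ]
    simp only [split]
    rw [Finset.sum_add_distrib, Finset.sum_sub_distrib, Finset.sum_sub_distrib]
    have s1 : (∑ _k : Fin m, (1:ℂ)) = (m:ℂ) := by simp
    have s2 : (∑ k, conj (w k k)) = 1 := by
      have : ∀ k, conj (w k k) = (gv k * conj (gv k)) / G := fun k => hconjw k k
      simp only [this]
      rw [← Finset.sum_div, hGsum, div_self hGne]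
    have s3 : (∑ k, w k k) = 1 := by
      have : ∀ k, w k k = (conj (gv k) * gv k) / G := fun k => rfl
      simp only [this]
      rw [← Finset.sum_div, hGsum', div_self hGne]
    have s4 : (∑ k, ∑ l, w k l * conj (w k l)) = 1 := by
      have : ∀ k l, w k l * conj (w k l)
          = (conj (gv k) * gv k) * ((gv l * conj (gv l)) * ((1:ℂ)/G/G)) := by
        intro k l
        rw [hconjw k l, hw]
        ring
      simp only [this]
      rw [← Finset.sum_mul_sum, ← Finset.sum_mul, hGsum', hGsum]
      field_simp
    rw [s1, s2, s3, s4]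
    ring
  have hcast : ((∑ k, ∑ l, Complex.normSq ((if k = l then (1:ℂ) else 0) - w k l) : ℝ) : ℂ)
      = (((m:ℝ) - 1 : ℝ) : ℂ) := by
    rw [show (((m:ℝ) - 1 : ℝ) : ℂ) = (m:ℂ) - 1 by push_cast; ring, ← key]
    push_cast
    exact Finset.sum_congr rfl fun k _ => Finset.sum_congr rfl fun l _ =>
      (Complex.mul_conj _).symm
  exact_mod_cast hcast
/-- Skoda's pointwise inequality (Lemma 5.1).  At a point `z₀` where the tuple
`g = (g₁,…,g_m)` of holomorphic functions satisfies `|g| > 0`, with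
`a k μ = ∂g_k/∂z_μ`, the complex Hessian of `log|g|²` is
`H μ ν = (|g|² Σ_k a_{kμ} ā_{kν} − (Σ_k a_{kμ} ḡ_k)(Σ_k ā_{kν} g_k))/|g|⁴`
and `∂/∂z_μ(g_k/|g|²) = a_{kμ}/|g|² − g_k (Σ_l a_{lμ} ḡ_l)/|g|⁴`.  Then for any
`m×n` matrix `ζ` and `q = min{n, m−1}`,
`q·Σ_{k,μ,ν} H_{μν} ζ_{kμ} ζ̄_{kν} ≥ |g|²·|Σ_{k,μ} ∂/∂z_μ(g_k/|g|²) ζ_{kμ}|²`. -/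
theorem stmt_3 (n m : ℕ) (hm : 1 ≤ m)
    (g : Fin m → (Fin n → ℂ) → ℂ) (z₀ : Fin n → ℂ)
    (hg : ∀ k, DifferentiableAt ℂ (g k) z₀)
    (hpos : 0 < ∑ k, Complex.normSq (g k z₀))
    (ζ : Fin m → Fin n → ℂ) (q : ℕ) (hq : q = min n (m - 1)) :
    let G : ℝ := ∑ k, Complex.normSq (g k z₀)
    let a : Fin m → Fin n → ℂ := fun k μ => fderiv ℂ (g k) z₀ (Pi.single μ 1)
    -- complex Hessian ∂²log|g|²/∂z_μ∂z̄_ν at z₀ (valid since g is holomorphic):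
    let Hess : Fin n → Fin n → ℂ := fun μ ν =>
      ((G : ℂ) * ∑ k, a k μ * conj (a k ν) -
        (∑ k, a k μ * conj (g k z₀)) * conj (∑ k, a k ν * conj (g k z₀))) / (G : ℂ) ^ 2
    -- ∂/∂z_μ (g_k/|g|²) at z₀:
    let D : Fin m → Fin n → ℂ := fun k μ =>
      a k μ / (G : ℂ) - g k z₀ * (∑ l, a l μ * conj (g l z₀)) / (G : ℂ) ^ 2
    G * Complex.normSq (∑ k, ∑ μ, D k μ * ζ k μ) ≤
      (q : ℝ) * (∑ k, ∑ μ, ∑ ν, Hess μ ν * ζ k μ * conj (ζ k ν)).re := by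
  intro G a Hess D
  have hG0 : (0:ℝ) < G := hpos
  have hGne : (G:ℂ) ≠ 0 := Complex.ofReal_ne_zero.mpr (ne_of_gt hG0)
  have hGsum : (∑ l, g l z₀ * conj (g l z₀)) = (G:ℂ) := by
    rw [show G = ∑ k, Complex.normSq (g k z₀) from rfl]
    push_cast
    exact Finset.sum_congr rfl fun l _ => Complex.mul_conj _
  set bb : Fin n → ℂ := fun μ => ∑ l, a l μ * conj (g l z₀) with hbb
  set A : Fin m → Fin m → ℂ := fun k l => ∑ μ, ζ k μ * a l μ with hA
  set β : Fin m → ℂ := fun k => ∑ μ, ζ k μ * bb μ with hβdef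
  set M : Fin m → Fin m → ℂ := fun k l => A k l - β k * g l z₀ / G with hM
  -- auxiliary identities
  have hβ2 : ∀ k, (∑ l, conj (g l z₀) * A k l) = β k := by
    intro k
    calc (∑ l, conj (g l z₀) * A k l)
        = ∑ l, ∑ μ, conj (g l z₀) * (ζ k μ * a l μ) := by
          refine Finset.sum_congr rfl fun l _ => ?_
          rw [show A k l = ∑ μ, ζ k μ * a l μ from rfl, Finset.mul_sum]
      _ = ∑ μ, ∑ l, conj (g l z₀) * (ζ k μ * a l μ) := Finset.sum_comm
      _ = ∑ μ, ζ k μ * bb μ := by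
          refine Finset.sum_congr rfl fun μ _ => ?_
          rw [show bb μ = ∑ l, a l μ * conj (g l z₀) from rfl, Finset.mul_sum]
          exact Finset.sum_congr rfl fun l _ => by ring
      _ = β k := rfl
  have hβ3 : ∀ k, (∑ l, g l z₀ * conj (A k l)) = conj (β k) := by
    intro k
    rw [← hβ2 k, map_sum]
    exact Finset.sum_congr rfl fun l _ => by simp [map_mul]
  -- identity for the D-sum
  have h1 : (∑ k, ∑ μ, D k μ * ζ k μ) = (∑ k, M k k) / (G:ℂ) := by
    rw [Finset.sum_div]
    refine Finset.sum_congr rfl fun k _ => ?_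
    calc (∑ μ, D k μ * ζ k μ)
        = ∑ μ, ((ζ k μ * a k μ) / (G:ℂ) - (g k z₀ / (G:ℂ)^2) * (ζ k μ * bb μ)) := by
          refine Finset.sum_congr rfl fun μ _ => ?_
          rw [show D k μ = a k μ / (G:ℂ) - g k z₀ * bb μ / (G:ℂ)^2 from rfl]
          ring
      _ = (∑ μ, ζ k μ * a k μ) / (G:ℂ) - (g k z₀ / (G:ℂ)^2) * (∑ μ, ζ k μ * bb μ) := by
          rw [Finset.sum_sub_distrib, ← Finset.sum_div, ← Finset.mul_sum]
      _ = M k k / (G:ℂ) := by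
          rw [show M k k = A k k - β k * g k z₀ / G from rfl,
              show A k k = ∑ μ, ζ k μ * a k μ from rfl,
              show β k = ∑ μ, ζ k μ * bb μ from rfl]
          ring
  -- identity for the Hessian sum
  have hMl : ∀ k, (∑ l, M k l * conj (M k l))
      = (∑ l, A k l * conj (A k l)) - β k * conj (β k) / (G:ℂ) := by
    intro k
    have hconjM : ∀ l, conj (M k l) = conj (A k l) - conj (β k) * conj (g l z₀) / (G:ℂ) := by
      intro l
      rw [show M k l = A k l - β k * g l z₀ / G from rfl]
      simp [map_div₀, Complex.conj_ofReal]
    calc (∑ l, M k l * conj (M k l))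
        = ∑ l, (A k l * conj (A k l)
            - (conj (β k) / (G:ℂ)) * (conj (g l z₀) * A k l)
            - (β k / (G:ℂ)) * (g l z₀ * conj (A k l))
            + (β k * conj (β k) / (G:ℂ)^2) * (g l z₀ * conj (g l z₀))) := by
          refine Finset.sum_congr rfl fun l _ => ?_
          rw [show M k l = A k l - β k * g l z₀ / G from rfl, hconjM l]
          ring
      _ = (∑ l, A k l * conj (A k l))
            - (conj (β k) / (G:ℂ)) * (∑ l, conj (g l z₀) * A k l)
            - (β k / (G:ℂ)) * (∑ l, g l z₀ * conj (A k l))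
            + (β k * conj (β k) / (G:ℂ)^2) * (∑ l, g l z₀ * conj (g l z₀)) := by
          rw [Finset.sum_add_distrib, Finset.sum_sub_distrib, Finset.sum_sub_distrib,
            ← Finset.mul_sum, ← Finset.mul_sum, ← Finset.mul_sum]
      _ = (∑ l, A k l * conj (A k l)) - β k * conj (β k) / (G:ℂ) := by
          rw [hβ2 k, hβ3 k, hGsum]
          field_simp
          ring
  have h2 : (∑ k, ∑ μ, ∑ ν, Hess μ ν * ζ k μ * conj (ζ k ν))
      = ((∑ k, ∑ l, Complex.normSq (M k l) : ℝ) : ℂ) / (G:ℂ) := by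
    have perk : ∀ k, (∑ μ, ∑ ν, Hess μ ν * ζ k μ * conj (ζ k ν))
        = (∑ l, M k l * conj (M k l)) / (G:ℂ) := by
      intro k
      have hA1 : (∑ l, A k l * conj (A k l))
          = ∑ μ, ∑ ν, (∑ j, a j μ * conj (a j ν)) * (ζ k μ * conj (ζ k ν)) := by
        calc (∑ l, A k l * conj (A k l))
            = ∑ l, ∑ μ, ∑ ν, (ζ k μ * a l μ) * conj (ζ k ν * a l ν) := by
              refine Finset.sum_congr rfl fun l _ => ?_
              rw [show A k l = ∑ μ, ζ k μ * a l μ from rfl, map_sum, Finset.sum_mul_sum]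
          _ = ∑ μ, ∑ l, ∑ ν, (ζ k μ * a l μ) * conj (ζ k ν * a l ν) := Finset.sum_comm
          _ = ∑ μ, ∑ ν, ∑ l, (ζ k μ * a l μ) * conj (ζ k ν * a l ν) := by
              exact Finset.sum_congr rfl fun μ _ => Finset.sum_comm
          _ = ∑ μ, ∑ ν, (∑ j, a j μ * conj (a j ν)) * (ζ k μ * conj (ζ k ν)) := by
              refine Finset.sum_congr rfl fun μ _ => Finset.sum_congr rfl fun ν _ => ?_
              rw [Finset.sum_mul]
              refine Finset.sum_congr rfl fun j _ => ?_
              rw [map_mul]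
              ring
      have hb1 : β k * conj (β k)
          = ∑ μ, ∑ ν, (bb μ * conj (bb ν)) * (ζ k μ * conj (ζ k ν)) := by
        rw [show β k = ∑ μ, ζ k μ * bb μ from rfl, map_sum, Finset.sum_mul_sum]
        refine Finset.sum_congr rfl fun μ _ => Finset.sum_congr rfl fun ν _ => ?_
        rw [map_mul]; ring
      calc (∑ μ, ∑ ν, Hess μ ν * ζ k μ * conj (ζ k ν))
          = ∑ μ, ∑ ν, (((G:ℂ) * (∑ j, a j μ * conj (a j ν))) * (ζ k μ * conj (ζ k ν))
              - (bb μ * conj (bb ν)) * (ζ k μ * conj (ζ k ν))) / (G:ℂ)^2 := by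
            refine Finset.sum_congr rfl fun μ _ => Finset.sum_congr rfl fun ν _ => ?_
            rw [show Hess μ ν = ((G:ℂ) * (∑ j, a j μ * conj (a j ν))
                - bb μ * conj (bb ν)) / (G:ℂ)^2 from rfl]
            ring
        _ = ((G:ℂ) * (∑ μ, ∑ ν, (∑ j, a j μ * conj (a j ν)) * (ζ k μ * conj (ζ k ν)))
              - (∑ μ, ∑ ν, (bb μ * conj (bb ν)) * (ζ k μ * conj (ζ k ν)))) / (G:ℂ)^2 := by
            simp only [← Finset.sum_div]
            congr 1
            rw [Finset.mul_sum, ← Finset.sum_sub_distrib]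
            refine Finset.sum_congr rfl fun μ _ => ?_
            rw [Finset.mul_sum, ← Finset.sum_sub_distrib]
            refine Finset.sum_congr rfl fun ν _ => by ring
        _ = ((G:ℂ) * (∑ l, A k l * conj (A k l)) - β k * conj (β k)) / (G:ℂ)^2 := by
            rw [hA1, hb1]
        _ = (∑ l, M k l * conj (M k l)) / (G:ℂ) := by
            rw [hMl k]
            field_simp
    calc (∑ k, ∑ μ, ∑ ν, Hess μ ν * ζ k μ * conj (ζ k ν))
        = ∑ k, (∑ l, M k l * conj (M k l)) / (G:ℂ) :=
          Finset.sum_congr rfl fun k _ => perk k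
      _ = (∑ k, ∑ l, M k l * conj (M k l)) / (G:ℂ) := by rw [← Finset.sum_div]
      _ = ((∑ k, ∑ l, Complex.normSq (M k l) : ℝ) : ℂ) / (G:ℂ) := by
          congr 1
          push_cast
          exact Finset.sum_congr rfl fun k _ => Finset.sum_congr rfl fun l _ =>
            (Complex.mul_conj _)
  -- the core inequality
  have hcore : Complex.normSq (∑ k, M k k) ≤ (q:ℝ) * ∑ k, ∑ l, Complex.normSq (M k l) := by
    rcases le_total n (m - 1) with hc | hc
    · -- q = n : use the projection onto the column space of ζ
      have hqn : q = n := by rw [hq, min_eq_left hc]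
      obtain ⟨Q, hQn, hQact⟩ := exists_proj m n ζ
      refine trace_sq_le M Q (q:ℝ) ?_ ?_
      · intro k p
        refine hQact (fun l => M l p) ⟨fun μ => a p μ - bb μ * g p z₀ / (G:ℂ), fun l => ?_⟩ k
        show M l p = ∑ μ, ζ l μ * (a p μ - bb μ * g p z₀ / (G:ℂ))
        calc M l p = A l p - β l * g p z₀ / G := rfl
          _ = (∑ μ, ζ l μ * a p μ) - (∑ μ, ζ l μ * bb μ) * (g p z₀ / (G:ℂ)) := by
              rw [show A l p = ∑ μ, ζ l μ * a p μ from rfl,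
                show β l = ∑ μ, ζ l μ * bb μ from rfl]
              ring
          _ = ∑ μ, ζ l μ * (a p μ - bb μ * g p z₀ / (G:ℂ)) := by
              rw [Finset.sum_mul, ← Finset.sum_sub_distrib]
              exact Finset.sum_congr rfl fun μ _ => by ring
      · rw [hqn]
        exact hQn
    · -- q = m - 1 : use I - ḡgᵀ/G
      have hqm : q = m - 1 := by rw [hq, min_eq_right hc]
      set P : Fin m → Fin m → ℂ :=
        fun k l => (if k = l then (1:ℂ) else 0) - conj (g k z₀) * g l z₀ / G with hP
      have hβ2' : ∀ p, (∑ l, A p l * conj (g l z₀)) = β p := by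
        intro p
        rw [← hβ2 p]
        exact Finset.sum_congr rfl fun l _ => by ring
      have hMg : ∀ p, (∑ l, M p l * conj (g l z₀)) = 0 := by
        intro p
        calc (∑ l, M p l * conj (g l z₀))
            = ∑ l, (A p l * conj (g l z₀) - (β p / (G:ℂ)) * (g l z₀ * conj (g l z₀))) := by
              refine Finset.sum_congr rfl fun l _ => ?_
              rw [show M p l = A p l - β p * g l z₀ / G from rfl]
              ring
          _ = (∑ l, A p l * conj (g l z₀)) - (β p / (G:ℂ)) * (∑ l, g l z₀ * conj (g l z₀)) := by
              rw [Finset.sum_sub_distrib, ← Finset.mul_sum]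
          _ = 0 := by
              rw [hβ2' p, hGsum]
              field_simp
              ring
      have hMP : ∀ p k, (∑ l, M p l * P l k) = M p k := by
        intro p k
        calc (∑ l, M p l * P l k)
            = ∑ l, ((if l = k then (1:ℂ) else 0) * M p l
                - (g k z₀ / (G:ℂ)) * (M p l * conj (g l z₀))) := by
              refine Finset.sum_congr rfl fun l _ => ?_
              rw [show P l k = (if l = k then (1:ℂ) else 0) - conj (g l z₀) * g k z₀ / G from rfl]
              ring
          _ = (∑ l, (if l = k then (1:ℂ) else 0) * M p l)
                - (g k z₀ / (G:ℂ)) * (∑ l, M p l * conj (g l z₀)) := by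
              rw [Finset.sum_sub_distrib, ← Finset.mul_sum]
          _ = M p k := by
              rw [hMg p]
              simp [ite_mul, Finset.sum_ite_eq', Finset.mem_univ]
      have hPnorm : (∑ k, ∑ l, Complex.normSq (P k l)) = (m:ℝ) - 1 :=
        pnorm m (fun k => g k z₀) G hGne hGsum
      have h1' : ∀ k p, (∑ l, (fun k l => P l k) k l * (fun k l => M l k) l p)
          = (fun k l => M l k) k p := by
        intro k p
        show (∑ l, P l k * M p l) = M p k
        rw [← hMP p k]
        exact Finset.sum_congr rfl fun l _ => by ring
      have h2' : (∑ k, ∑ l, Complex.normSq ((fun k l => P l k) k l)) ≤ (q:ℝ) := by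
        show (∑ k, ∑ l, Complex.normSq (P l k)) ≤ (q:ℝ)
        rw [Finset.sum_comm, hPnorm, hqm, Nat.cast_sub hm]
        norm_num
      have tcore := trace_sq_le (fun k l => M l k) (fun k l => P l k) (q:ℝ) h1' h2'
      have swap : (∑ k, ∑ l, Complex.normSq (M l k)) = ∑ k, ∑ l, Complex.normSq (M k l) :=
        Finset.sum_comm
      rw [swap] at tcore
      exact tcore
  -- assemble
  rw [h1, h2]
  rw [Complex.normSq_div, Complex.normSq_ofReal, ← Complex.ofReal_div, Complex.ofReal_re]
  have lhs_eq : G * (Complex.normSq (∑ k, M k k) / (G * G))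
      = Complex.normSq (∑ k, M k k) / G := by
    field_simp
  rw [lhs_eq, show (q:ℝ) * ((∑ k, ∑ l, Complex.normSq (M k l)) / G)
      = ((q:ℝ) * (∑ k, ∑ l, Complex.normSq (M k l))) / G by ring]
  exact (div_le_div_iff_of_pos_right hG0).mpr hcore
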